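/- In the algebra A_0, an element a ∈ A_+ with initial idempotent I_i and final idempotent I_j and no factors of V_0 or V_{N+1} is uniquely determined by its Alexander grading: two monomials in the generators U_k, s_k with the same initial idempotent and the same Alexander grading are equal. -/

import Mathlib

/-- The ground ring 𝔽₂ (we restrict to monomials with no factors of V₀, V_{N+1}). -/
abbrev GroundRing := ZMod 2

/-- Generators of the associative algebra `A₀`: idempotents `I i`, and elements
`U i`, `s i`, for `i` ranging over `Fin N` (indices are taken mod `N`). -/
inductive AGen (N : ℕ) : Type
  | I : Fin N → AGen N
  | U : Fin N → AGen N
  | s : Fin N → AGen N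
deriving DecidableEq

variable (N : ℕ) [NeZero N]

open FreeAlgebra in
/-- The defining relations of `A₀` from the paper:
`I_i I_j = δ_{ij} I_i`; `I_j U_i = U_i I_j = δ_{ij} U_i`; `I_j s_i = δ_{ij} s_i`;
`s_i I_j = s_i` iff `j = i+1 (mod N)`; `U_i U_j = 0` for `i ≠ j`;
`U_i s_j = s_j U_i = 0`; `s_i s_j = 0` unless `j = i+1 (mod N)`. -/
inductive ARel : FreeAlgebra GroundRing (AGen N) → FreeAlgebra GroundRing (AGen N) → Prop
  | II (i j : Fin N) : ARel (ι GroundRing (AGen.I i) * ι GroundRing (AGen.I j))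
      (if i = j then ι GroundRing (AGen.I i) else 0)
  | IU (i j : Fin N) : ARel (ι GroundRing (AGen.I j) * ι GroundRing (AGen.U i))
      (if i = j then ι GroundRing (AGen.U i) else 0)
  | UI (i j : Fin N) : ARel (ι GroundRing (AGen.U i) * ι GroundRing (AGen.I j))
      (if i = j then ι GroundRing (AGen.U i) else 0)
  | Is (i j : Fin N) : ARel (ι GroundRing (AGen.I j) * ι GroundRing (AGen.s i))
      (if j = i then ι GroundRing (AGen.s i) else 0)
  | sI (i j : Fin N) : ARel (ι GroundRing (AGen.s i) * ι GroundRing (AGen.I j))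
      (if j = i + 1 then ι GroundRing (AGen.s i) else 0)
  | UU (i j : Fin N) : i ≠ j → ARel (ι GroundRing (AGen.U i) * ι GroundRing (AGen.U j)) 0
  | Us (i j : Fin N) : ARel (ι GroundRing (AGen.U i) * ι GroundRing (AGen.s j)) 0
  | sU (i j : Fin N) : ARel (ι GroundRing (AGen.s j) * ι GroundRing (AGen.U i)) 0
  | ss (i j : Fin N) : j ≠ i + 1 → ARel (ι GroundRing (AGen.s i) * ι GroundRing (AGen.s j)) 0

/-- The associative algebra `A₀`, presented by the above generators and relations. -/
abbrev A0 := RingQuot (ARel N)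

/-- The idempotent generator `I i` of `A₀`. -/
noncomputable def aI (i : Fin N) : A0 N :=
  RingQuot.mkAlgHom GroundRing (ARel N) (FreeAlgebra.ι GroundRing (AGen.I i))

/-- The generator `U i` of `A₀`. -/
noncomputable def aU (i : Fin N) : A0 N :=
  RingQuot.mkAlgHom GroundRing (ARel N) (FreeAlgebra.ι GroundRing (AGen.U i))

/-- The generator `s i` of `A₀`. -/
noncomputable def aS (i : Fin N) : A0 N :=
  RingQuot.mkAlgHom GroundRing (ARel N) (FreeAlgebra.ι GroundRing (AGen.s i))

open Fin.NatCast in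
/-- `s_{ii} = s_i s_{i+1} ⋯ s_{i-1}`, the full cyclic product of the `N` generators
`s_j` starting at index `i` (indices mod `N`). -/
noncomputable def scyc (i : Fin N) : A0 N :=
  ((List.range N).map (fun k => aS N (i + (k : Fin N)))).prod

/-- Letters for monomials in the augmentation ideal of `A₀`: the generators `U k`, `s k`. -/
inductive APGen (N : ℕ) : Type
  | U : Fin N → APGen N
  | s : Fin N → APGen N
deriving DecidableEq

/-- The image in `A₀` of a letter. -/
noncomputable def apToA0 : APGen N → A0 N
  | APGen.U i => aU N i
  | APGen.s i => aS N i

/-- The product in `A₀` of a word in the letters `U k, s k`. -/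
noncomputable def prodA (w : List (APGen N)) : A0 N := (w.map (apToA0 N)).prod

/-- The Alexander grading of a letter, valued in `ℤ^{2N}` = `H₀(S¹ ∖ {p₁,…,p_{2N}}; ℤ)`:
`A(U_j) = h_{2j-1}` and `A(s_j) = h_{2j}` (0-indexed as `2j` and `2j+1`). -/
def alexGen : APGen N → (Fin (2 * N) → ℤ)
  | APGen.U j => fun t => if t.val = 2 * j.val then 1 else 0
  | APGen.s j => fun t => if t.val = 2 * j.val + 1 then 1 else 0

/-- The Alexander grading of a word: the sum of the gradings of its letters. -/
def alexW (w : List (APGen N)) : Fin (2 * N) → ℤ := (w.map (alexGen N)).sum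

/-- The index of the initial idempotent of a letter: `I_j U_j = U_j`, `I_j s_j = s_j`. -/
def initIdxA : APGen N → Fin N
  | APGen.U j => j
  | APGen.s j => j

/-! ### Auxiliary material -/

set_option linter.unusedSectionVars false

/-- Compatibility of adjacent letters: the product of an incompatible pair is `0`. -/
def compatA : APGen N → APGen N → Prop
  | APGen.U i, APGen.U j => i = j
  | APGen.s i, APGen.s j => j = i + 1
  | _, _ => False

lemma apToA0_mul_eq_zero {a b : APGen N} (h : ¬ compatA N a b) :
    apToA0 N a * apToA0 N b = 0 := by
  cases a with
  | U i =>
    cases b with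
    | U j =>
      have hij : i ≠ j := h
      simp only [apToA0, aU]
      rw [← map_mul, RingQuot.mkAlgHom_rel _ (ARel.UU i j hij), map_zero]
    | s j =>
      simp only [apToA0, aU, aS]
      rw [← map_mul, RingQuot.mkAlgHom_rel _ (ARel.Us i j), map_zero]
  | s i =>
    cases b with
    | U j =>
      simp only [apToA0, aU, aS]
      rw [← map_mul, RingQuot.mkAlgHom_rel _ (ARel.sU j i), map_zero]
    | s j =>
      have hij : j ≠ i + 1 := h
      simp only [apToA0, aS]
      rw [← map_mul, RingQuot.mkAlgHom_rel _ (ARel.ss i j hij), map_zero]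

lemma prodA_cons (a : APGen N) (w : List (APGen N)) :
    prodA N (a :: w) = apToA0 N a * prodA N w := by
  simp [prodA]

lemma chain_of_prodA_ne_zero : ∀ w : List (APGen N), prodA N w ≠ 0 → w.Chain' (compatA N)
  | [], _ => List.isChain_nil
  | [a], _ => List.isChain_singleton a
  | a :: b :: w, h => by
    rw [List.Chain', List.isChain_cons_cons]
    constructor
    · by_contra hc
      apply h
      rw [prodA_cons, prodA_cons, ← mul_assoc, apToA0_mul_eq_zero N hc, zero_mul]
    · apply chain_of_prodA_ne_zero (b :: w)
      intro h0
      apply h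
      rw [prodA_cons, h0, mul_zero]

/-- The word `s_i s_{i+1} ⋯` of length `n`. -/
def sWord (i : Fin N) : ℕ → List (APGen N)
  | 0 => []
  | n + 1 => APGen.s i :: sWord (i + 1) n

/-- Canonical form of a nonzero word of length `n+1` starting with letter `a`. -/
def canonL (a : APGen N) (n : ℕ) : List (APGen N) :=
  match a with
  | APGen.U i => List.replicate (n + 1) (APGen.U i)
  | APGen.s i => sWord N i (n + 1)

lemma canonL_U' (i : Fin N) (n : ℕ) :
    canonL N (APGen.U i) n = List.replicate (n + 1) (APGen.U i) := rfl

lemma canonL_s (i : Fin N) (n : ℕ) :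
    canonL N (APGen.s i) n = sWord N i (n + 1) := rfl

lemma canon_of_chain : ∀ (w : List (APGen N)) (a : APGen N),
    (a :: w).Chain' (compatA N) → a :: w = canonL N a w.length
  | [], a, _ => by
    cases a with
    | U i => rfl
    | s i => rfl
  | b :: w, a, h => by
    rw [List.Chain', List.isChain_cons_cons] at h
    obtain ⟨hab, hbw⟩ := h
    have ih := canon_of_chain w b hbw
    cases a with
    | U i =>
      cases b with
      | U j =>
        obtain rfl : i = j := hab
        rw [canonL_U'] at ih ⊢
        rw [List.length_cons, List.replicate_succ, ← ih]
      | s j => exact absurd hab (by simp [compatA])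
    | s i =>
      cases b with
      | U j => exact absurd hab (by simp [compatA])
      | s j =>
        obtain rfl : j = i + 1 := hab
        rw [canonL_s] at ih ⊢
        rw [List.length_cons, sWord, ← ih]

lemma alexW_nil : alexW N ([] : List (APGen N)) = 0 := by simp [alexW]

lemma alexW_cons (a : APGen N) (w : List (APGen N)) :
    alexW N (a :: w) = alexGen N a + alexW N w := by
  simp [alexW]

lemma sum_alexGen (a : APGen N) : ∑ t, alexGen N a t = 1 := by
  cases a with
  | U j =>
    have hj : 2 * j.val < 2 * N := by have := j.isLt; omega
    have h : ∀ t : Fin (2 * N), alexGen N (APGen.U j) t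
        = if t = ⟨2 * j.val, hj⟩ then 1 else 0 := by
      intro t
      simp [alexGen, Fin.ext_iff]
    simp [h]
  | s j =>
    have hj : 2 * j.val + 1 < 2 * N := by have := j.isLt; omega
    have h : ∀ t : Fin (2 * N), alexGen N (APGen.s j) t
        = if t = ⟨2 * j.val + 1, hj⟩ then 1 else 0 := by
      intro t
      simp [alexGen, Fin.ext_iff]
    simp [h]

lemma sum_alexW (w : List (APGen N)) : ∑ t, alexW N w t = (w.length : ℤ) := by
  induction w with
  | nil => simp [alexW_nil]
  | cons a w ih =>
    simp only [alexW_cons, Pi.add_apply, Finset.sum_add_distrib, ih, sum_alexGen,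
      List.length_cons]
    push_cast
    ring

lemma alexW_replicate_U (n : ℕ) (i : Fin N) (t : Fin (2 * N)) (ht : t.val = 2 * i.val) :
    alexW N (List.replicate n (APGen.U i)) t = n := by
  induction n with
  | zero => simp [alexW_nil]
  | succ n ih =>
    rw [List.replicate_succ, alexW_cons]
    simp only [Pi.add_apply, ih]
    simp [alexGen, ht]
    ring

lemma alexW_sWord_even (n : ℕ) : ∀ (j : Fin N) (t : Fin (2 * N)) (i : Fin N),
    t.val = 2 * i.val → alexW N (sWord N j n) t = 0 := by
  induction n with
  | zero => intro j t i ht; simp [sWord, alexW_nil]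
  | succ n ih =>
    intro j t i ht
    rw [sWord, alexW_cons]
    simp only [Pi.add_apply, ih (j + 1) t i ht]
    have h2 : t.val ≠ 2 * j.val + 1 := by omega
    simp [alexGen, h2]


/-- In `A₀`, a nonzero monomial in the generators `U_k, s_k` (an element
of `A₊` with no factors of `V₀` or `V_{N+1}`) is uniquely determined by its initial
idempotent and its Alexander grading: two such monomials with the same initial
idempotent and the same Alexander grading are equal. -/
theorem monomial_determined_by_alexander (hN : 2 < N)
    (w₁ w₂ : List (APGen N)) (h₁ : w₁ ≠ []) (h₂ : w₂ ≠ [])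
    (hz₁ : prodA N w₁ ≠ 0) (hz₂ : prodA N w₂ ≠ 0)
    (hidem : w₁.head?.map (initIdxA N) = w₂.head?.map (initIdxA N))
    (halex : alexW N w₁ = alexW N w₂) :
    prodA N w₁ = prodA N w₂ := by
  obtain ⟨a₁, t₁, rfl⟩ : ∃ a t, w₁ = a :: t := by
    cases w₁ with
    | nil => exact absurd rfl h₁
    | cons a t => exact ⟨a, t, rfl⟩
  obtain ⟨a₂, t₂, rfl⟩ : ∃ a t, w₂ = a :: t := by
    cases w₂ with
    | nil => exact absurd rfl h₂
    | cons a t => exact ⟨a, t, rfl⟩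
  have hid : initIdxA N a₁ = initIdxA N a₂ := by simpa using hidem
  have hw₁ := canon_of_chain N t₁ a₁ (chain_of_prodA_ne_zero N _ hz₁)
  have hw₂ := canon_of_chain N t₂ a₂ (chain_of_prodA_ne_zero N _ hz₂)
  have hlen : t₁.length = t₂.length := by
    have h1 := sum_alexW N (a₁ :: t₁)
    have h2 := sum_alexW N (a₂ :: t₂)
    rw [halex, h2] at h1
    simp only [List.length_cons] at h1
    exact_mod_cast (by omega : (t₁.length : ℤ) = (t₂.length : ℤ))
  cases a₁ with
  | U i =>
    cases a₂ with
    | U j =>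
      obtain rfl : i = j := hid
      rw [hw₁, hw₂, hlen]
    | s j =>
      exfalso
      obtain rfl : i = j := hid
      have hji : 2 * i.val < 2 * N := by have := i.isLt; omega
      have e1 : alexW N (APGen.U i :: t₁) ⟨2 * i.val, hji⟩ = (t₁.length + 1 : ℕ) := by
        rw [hw₁, canonL_U']
        exact alexW_replicate_U N _ i _ rfl
      have e2 : alexW N (APGen.s i :: t₂) ⟨2 * i.val, hji⟩ = 0 := by
        rw [hw₂, canonL_s]
        exact alexW_sWord_even N _ i _ i rfl
      rw [halex, e2] at e1
      exact absurd e1.symm (by push_cast; omega)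
  | s i =>
    cases a₂ with
    | U j =>
      exfalso
      obtain rfl : i = j := hid
      have hji : 2 * i.val < 2 * N := by have := i.isLt; omega
      have e2 : alexW N (APGen.U i :: t₂) ⟨2 * i.val, hji⟩ = (t₂.length + 1 : ℕ) := by
        rw [hw₂, canonL_U']
        exact alexW_replicate_U N _ i _ rfl
      have e1 : alexW N (APGen.s i :: t₁) ⟨2 * i.val, hji⟩ = 0 := by
        rw [hw₁, canonL_s]
        exact alexW_sWord_even N _ i _ i rfl
      rw [halex, e2] at e1
      exact absurd e1 (by push_cast; omega)
    | s j =>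
      obtain rfl : i = j := hid
      rw [hw₁, hw₂, hlen]
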